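/- Let A₁₁, A₁₂, A₂₂ be Riccati data on a complex separable Hilbert space H with diag{A₁₁} − A₂₂ ≫ 0, and let (sₙ) be the successive approximations. Then every even iterate is dominated by every odd iterate: s_{2n} ≤ s_{2m+1} in the Loewner order for all natural numbers n and m. -/

import Mathlib

open MeasureTheory ContinuousLinearMap Filter
open scoped ENNReal NNReal Topology

noncomputable section

/-- `ℓ²(H)`: the Hilbert space of square-summable sequences in `H`, indexed by `ℕ`
(index `k : ℕ` corresponds to the `(k+1)`-st entry in the paper's `1`-based indexing). -/
abbrev l2 (H : Type*) [NormedAddCommGroup H] [InnerProductSpace ℂ H] : Type _ :=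
  lp (fun _ : ℕ => H) 2

variable {H : Type*} [NormedAddCommGroup H] [InnerProductSpace ℂ H]

lemma memℓp_diag (q : H →L[ℂ] H) (ξ : l2 H) : Memℓp (fun k => q (ξ k)) 2 := by
  have h2 : (0:ℝ) < (2 : ℝ≥0∞).toReal := by norm_num
  apply memℓp_gen
  have hs : Summable (fun k => ‖q‖ ^ (2 : ℝ≥0∞).toReal * ‖ξ k‖ ^ (2 : ℝ≥0∞).toReal) :=
    ((lp.memℓp ξ).summable h2).mul_left _
  refine Summable.of_nonneg_of_le (fun k => ?_) (fun k => ?_) hs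
  · positivity
  · rw [← Real.mul_rpow (norm_nonneg _) (norm_nonneg _)]
    exact Real.rpow_le_rpow (norm_nonneg _) (q.le_opNorm _) (by norm_num)

/-- `diag{q}`: the bounded block-diagonal operator on `ℓ²(H)` acting componentwise,
`(diag{q} ξ)ₖ = q (ξₖ)`. -/
def diagOp (q : H →L[ℂ] H) : l2 H →L[ℂ] l2 H :=
  LinearMap.mkContinuous
    { toFun := fun ξ => ⟨fun k => q (ξ k), memℓp_diag q ξ⟩
      map_add' := fun ξ η => by ext k; simp [lp.coeFn_add]; rfl
      map_smul' := fun c ξ => by ext k; simp [lp.coeFn_smul] }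
    ‖q‖
    (by
      intro ξ
      have h2 : (0:ℝ) < (2 : ℝ≥0∞).toReal := by norm_num
      refine lp.norm_le_of_tsum_le h2 (by positivity) ?_
      have hξ : ‖ξ‖ ^ (2 : ℝ≥0∞).toReal = ∑' k, ‖ξ k‖ ^ (2 : ℝ≥0∞).toReal :=
        lp.norm_rpow_eq_tsum h2 ξ
      have hsum : Summable (fun k => ‖ξ k‖ ^ (2 : ℝ≥0∞).toReal) := (lp.memℓp ξ).summable h2
      calc ∑' k, ‖(fun k => q (ξ k)) k‖ ^ (2 : ℝ≥0∞).toReal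
          ≤ ∑' k, ‖q‖ ^ (2 : ℝ≥0∞).toReal * ‖ξ k‖ ^ (2 : ℝ≥0∞).toReal := by
            refine Summable.tsum_le_tsum (fun k => ?_) ?_ (hsum.mul_left _)
            · rw [← Real.mul_rpow (norm_nonneg _) (norm_nonneg _)]
              exact Real.rpow_le_rpow (norm_nonneg _) (q.le_opNorm _) (by norm_num)
            · refine Summable.of_nonneg_of_le (fun k => ?_) (fun k => ?_)
                (hsum.mul_left (‖q‖ ^ (2 : ℝ≥0∞).toReal))
              · positivity
              · rw [← Real.mul_rpow (norm_nonneg _) (norm_nonneg _)]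
                exact Real.rpow_le_rpow (norm_nonneg _) (q.le_opNorm _) (by norm_num)
        _ = (‖q‖ * ‖ξ‖) ^ (2 : ℝ≥0∞).toReal := by
            rw [tsum_mul_left, ← hξ, Real.mul_rpow (norm_nonneg _) (norm_nonneg _)])

@[simp] lemma diagOp_apply (q : H →L[ℂ] H) (ξ : l2 H) (k : ℕ) :
    (diagOp q ξ) k = q (ξ k) := rfl

/-- An operator is *strongly positive* (written `ρ ≫ 0` in the paper) if `δ • I ≤ ρ`
(Loewner order) for some `δ > 0`.  A strongly positive operator is boundedly invertible. -/
def StronglyPositive {E : Type*} [NormedAddCommGroup E] [InnerProductSpace ℂ E]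
    [CompleteSpace E] (ρ : E →L[ℂ] E) : Prop :=
  ∃ δ : ℝ, 0 < δ ∧ δ • (1 : E →L[ℂ] E) ≤ ρ

variable [CompleteSpace H]

/-- The Riccati map `ℱ(s) = A₁₁ + A₁₂ (diag{s} − A₂₂)⁻¹ A₁₂*`.  Here `Ring.inverse` is the
genuine inverse whenever `diag{s} − A₂₂` is boundedly invertible, which is guaranteed when
`diag{s} − A₂₂ ≫ 0`. -/
def riccatiMap (A11 : H →L[ℂ] H) (A12 : l2 H →L[ℂ] H) (A22 : l2 H →L[ℂ] l2 H)
    (s : H →L[ℂ] H) : H →L[ℂ] H :=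
  A11 + A12 ∘L Ring.inverse (diagOp s - A22) ∘L ContinuousLinearMap.adjoint A12

/-- The successive approximations `s₀ = A₁₁`, `s_{n+1} = ℱ(sₙ)`. -/
def riccatiSeq (A11 : H →L[ℂ] H) (A12 : l2 H →L[ℂ] H) (A22 : l2 H →L[ℂ] l2 H) :
    ℕ → (H →L[ℂ] H)
  | 0 => A11
  | n + 1 => riccatiMap A11 A12 A22 (riccatiSeq A11 A12 A22 n)

end

noncomputable section Aux

open ContinuousLinearMap

variable {H : Type*} [NormedAddCommGroup H] [InnerProductSpace ℂ H]

local notation "⟪" x ", " y "⟫" => @inner ℂ _ _ x y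

lemma diagOp_sub (p q : H →L[ℂ] H) : diagOp (p - q) = diagOp p - diagOp q := by
  ext ξ k
  simp [lp.coeFn_sub]

section Complete

variable [CompleteSpace H]

lemma diagOp_adjoint (q : H →L[ℂ] H) :
    diagOp (ContinuousLinearMap.adjoint q) = ContinuousLinearMap.adjoint (diagOp q) := by
  rw [ContinuousLinearMap.eq_adjoint_iff]
  intro ξ η
  rw [lp.inner_eq_tsum, lp.inner_eq_tsum]
  refine tsum_congr fun k => ?_
  simp [ContinuousLinearMap.adjoint_inner_left]

lemma diagOp_nonneg {q : H →L[ℂ] H} (hq : 0 ≤ q) : 0 ≤ diagOp q := by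
  rw [ContinuousLinearMap.nonneg_iff_isPositive] at hq ⊢
  refine ⟨?_, fun ξ => ?_⟩
  · rw [← ContinuousLinearMap.isSelfAdjoint_iff_isSymmetric, isSelfAdjoint_iff,
      ContinuousLinearMap.star_eq_adjoint, ← diagOp_adjoint,
      hq.isSelfAdjoint.adjoint_eq]
  · have hsum : Summable fun k => ⟪q (ξ k), ξ k⟫ := by
      simpa using lp.summable_inner (diagOp q ξ) ξ
    rw [ContinuousLinearMap.reApplyInnerSelf_apply, lp.inner_eq_tsum]
    simp only [diagOp_apply]
    rw [RCLike.re_tsum ℂ hsum]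
    exact tsum_nonneg fun k => hq.2 (ξ k)

lemma diagOp_mono {p q : H →L[ℂ] H} (h : p ≤ q) : diagOp p ≤ diagOp q := by
  have := diagOp_nonneg (sub_nonneg.2 h)
  rw [diagOp_sub] at this
  exact sub_nonneg.1 this

end Complete

section SP

variable {E : Type*} [NormedAddCommGroup E] [InnerProductSpace ℂ E] [CompleteSpace E]

lemma smul_one_nonneg {δ : ℝ} (hδ : 0 ≤ δ) : (0 : E →L[ℂ] E) ≤ δ • 1 := by
  rw [ContinuousLinearMap.nonneg_iff_isPositive]
  refine ⟨ContinuousLinearMap.isSelfAdjoint_iff_isSymmetric.mp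
    (IsSelfAdjoint.smul (star_trivial δ) (IsSelfAdjoint.one _)), fun x => ?_⟩
  rw [ContinuousLinearMap.reApplyInnerSelf_apply]
  simp only [ContinuousLinearMap.smul_apply, ContinuousLinearMap.one_apply]
  rw [show (δ • x : E) = (δ : ℂ) • x from RCLike.real_smul_eq_coe_smul (K := ℂ) δ x]
  rw [inner_smul_left, Complex.conj_ofReal]
  have h0 : RCLike.re ((δ : ℂ) * (⟪x, x⟫ : ℂ)) = δ * RCLike.re (⟪x, x⟫ : ℂ) := by
    simp [RCLike.mul_re]
  rw [h0]
  exact mul_nonneg hδ inner_self_nonneg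

lemma StronglyPositive.nonneg {ρ : E →L[ℂ] E} (h : StronglyPositive ρ) : 0 ≤ ρ := by
  obtain ⟨δ, hδ, hle⟩ := h
  exact le_trans (smul_one_nonneg hδ.le) hle

lemma StronglyPositive.isUnit {ρ : E →L[ℂ] E} (h : StronglyPositive ρ) : IsUnit ρ := by
  obtain ⟨δ, hδ, hle⟩ := h
  refine CStarAlgebra.isUnit_of_le _ hle
    (IsStrictlyPositive.iff_of_unital.mpr ⟨smul_one_nonneg hδ.le, ?_⟩)
  exact ⟨⟨δ • 1, δ⁻¹ • 1, by
    rw [smul_mul_smul_comm, mul_inv_cancel₀ hδ.ne', one_mul, one_smul], by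
    rw [smul_mul_smul_comm, inv_mul_cancel₀ hδ.ne', one_mul, one_smul]⟩, rfl⟩

lemma StronglyPositive.mono {ρ σ : E →L[ℂ] E} (h : StronglyPositive ρ) (hle : ρ ≤ σ) :
    StronglyPositive σ := by
  obtain ⟨δ, hδ, h1⟩ := h
  exact ⟨δ, hδ, h1.trans hle⟩

lemma inverse_nonneg {ρ : E →L[ℂ] E} (h : StronglyPositive ρ) :
    0 ≤ Ring.inverse ρ := by
  lift ρ to (E →L[ℂ] E)ˣ using h.isUnit with u
  rw [Ring.inverse_unit]
  exact CFC.inv_nonneg_of_nonneg u h.nonneg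

lemma inverse_antitone {ρ σ : E →L[ℂ] E} (hρ : StronglyPositive ρ) (hσ : StronglyPositive σ)
    (h : ρ ≤ σ) : Ring.inverse σ ≤ Ring.inverse ρ := by
  lift ρ to (E →L[ℂ] E)ˣ using hρ.isUnit with u
  lift σ to (E →L[ℂ] E)ˣ using hσ.isUnit with v
  rw [Ring.inverse_unit, Ring.inverse_unit]
  exact CStarAlgebra.inv_le_inv hρ.nonneg h

end SP

section Conj

variable {E F : Type*} [NormedAddCommGroup E] [InnerProductSpace ℂ E] [CompleteSpace E]
  [NormedAddCommGroup F] [InnerProductSpace ℂ F] [CompleteSpace F]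

lemma conj_adjoint_mono (B : E →L[ℂ] F) {ρ σ : E →L[ℂ] E} (h : ρ ≤ σ) :
    B ∘L ρ ∘L ContinuousLinearMap.adjoint B ≤ B ∘L σ ∘L ContinuousLinearMap.adjoint B := by
  rw [ContinuousLinearMap.le_def] at h ⊢
  have key := h.conj_adjoint B
  have : B ∘L σ ∘L ContinuousLinearMap.adjoint B - B ∘L ρ ∘L ContinuousLinearMap.adjoint B
      = B ∘L (σ - ρ) ∘L ContinuousLinearMap.adjoint B := by
    rw [ContinuousLinearMap.sub_comp, ContinuousLinearMap.comp_sub]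
  rw [this]
  exact key

lemma conj_adjoint_nonneg (B : E →L[ℂ] F) {ρ : E →L[ℂ] E} (h : 0 ≤ ρ) :
    0 ≤ B ∘L ρ ∘L ContinuousLinearMap.adjoint B := by
  have := conj_adjoint_mono B h
  simpa using this

end Conj

section Riccati

variable [CompleteSpace H]
variable (A11 : H →L[ℂ] H) (A12 : l2 H →L[ℂ] H) (A22 : l2 H →L[ℂ] l2 H)

lemma riccatiSeq_succ (n : ℕ) :
    riccatiSeq A11 A12 A22 (n + 1) = riccatiMap A11 A12 A22 (riccatiSeq A11 A12 A22 n) := rfl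

variable {A11 A12 A22}
variable (hgap : StronglyPositive (diagOp A11 - A22))

include hgap

lemma gap_of_ge {s : H →L[ℂ] H} (hs : A11 ≤ s) : StronglyPositive (diagOp s - A22) := by
  refine hgap.mono ?_
  have h := diagOp_mono hs
  exact sub_le_sub_right h A22

lemma riccatiMap_ge {s : H →L[ℂ] H} (hs : A11 ≤ s) : A11 ≤ riccatiMap A11 A12 A22 s := by
  have h := conj_adjoint_nonneg A12 (inverse_nonneg (gap_of_ge hgap hs))
  calc A11 = A11 + 0 := by rw [add_zero]
    _ ≤ A11 + A12 ∘L Ring.inverse (diagOp s - A22) ∘L ContinuousLinearMap.adjoint A12 :=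
        add_le_add_right h A11
    _ = riccatiMap A11 A12 A22 s := rfl

lemma riccatiMap_antitone {s t : H →L[ℂ] H} (hs : A11 ≤ s) (ht : A11 ≤ t) (hst : s ≤ t) :
    riccatiMap A11 A12 A22 t ≤ riccatiMap A11 A12 A22 s := by
  have hRs := gap_of_ge hgap hs
  have hRt := gap_of_ge hgap ht
  have hR : diagOp s - A22 ≤ diagOp t - A22 := sub_le_sub_right (diagOp_mono hst) A22
  have hinv := inverse_antitone hRs hRt hR
  have := conj_adjoint_mono A12 hinv
  exact add_le_add_right this A11

lemma riccatiSeq_ge : ∀ n, A11 ≤ riccatiSeq A11 A12 A22 n := by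
  intro n
  induction n with
  | zero => exact le_refl _
  | succ n ih => exact riccatiMap_ge hgap ih

end Riccati

end Aux

/-- Every even successive approximation is dominated by every odd one:
`s_{2n} ≤ s_{2m+1}` in the Loewner order. -/
theorem riccati_even_le_odd
    {H : Type*} [NormedAddCommGroup H] [InnerProductSpace ℂ H] [CompleteSpace H]
    [TopologicalSpace.SeparableSpace H]
    (A11 : H →L[ℂ] H) (A12 : l2 H →L[ℂ] H) (A22 : l2 H →L[ℂ] l2 H)
    (hA11sa : IsSelfAdjoint A11) (hA22sa : IsSelfAdjoint A22)
    (hgap : StronglyPositive (diagOp A11 - A22)) :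
    ∀ n m : ℕ, riccatiSeq A11 A12 A22 (2 * n) ≤ riccatiSeq A11 A12 A22 (2 * m + 1) := by
  have hge : ∀ n, A11 ≤ riccatiSeq A11 A12 A22 n := riccatiSeq_ge hgap
  have h0 : riccatiSeq A11 A12 A22 0 = A11 := rfl
  have cast : ∀ a b c d : ℕ, a = c → b = d →
      riccatiSeq A11 A12 A22 a ≤ riccatiSeq A11 A12 A22 b →
      riccatiSeq A11 A12 A22 c ≤ riccatiSeq A11 A12 A22 d := by
    intro a b c d h1 h2 h
    subst h1; subst h2; exact h
  have step : ∀ i j : ℕ, riccatiSeq A11 A12 A22 i ≤ riccatiSeq A11 A12 A22 j →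
      riccatiSeq A11 A12 A22 (j + 1) ≤ riccatiSeq A11 A12 A22 (i + 1) := by
    intro i j h
    rw [riccatiSeq_succ, riccatiSeq_succ]
    exact riccatiMap_antitone hgap (hge i) (hge j) h
  have h01 : riccatiSeq A11 A12 A22 0 ≤ riccatiSeq A11 A12 A22 1 := by
    rw [h0]; exact hge 1
  have h02 : riccatiSeq A11 A12 A22 0 ≤ riccatiSeq A11 A12 A22 2 := by
    rw [h0]; exact hge 2
  have both : ∀ k, riccatiSeq A11 A12 A22 (2*k) ≤ riccatiSeq A11 A12 A22 (2*k+1) ∧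
      riccatiSeq A11 A12 A22 (2*k+2) ≤ riccatiSeq A11 A12 A22 (2*k+1) := by
    intro k
    induction k with
    | zero =>
      exact ⟨cast 0 1 (2*0) (2*0+1) (by omega) (by omega) h01,
        cast (1+1) (0+1) (2*0+2) (2*0+1) (by omega) (by omega) (step 0 1 h01)⟩
    | succ k ih =>
      have h1 : riccatiSeq A11 A12 A22 (2*k+2) ≤ riccatiSeq A11 A12 A22 (2*k+3) :=
        cast ((2*k+1)+1) ((2*k+2)+1) (2*k+2) (2*k+3) (by omega) (by omega)
          (step (2*k+2) (2*k+1) ih.2)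
      have h2 : riccatiSeq A11 A12 A22 (2*k+4) ≤ riccatiSeq A11 A12 A22 (2*k+3) :=
        cast ((2*k+3)+1) ((2*k+2)+1) (2*k+4) (2*k+3) (by omega) (by omega)
          (step (2*k+2) (2*k+3) h1)
      exact ⟨cast (2*k+2) (2*k+3) (2*(k+1)) (2*(k+1)+1) (by omega) (by omega) h1,
        cast (2*k+4) (2*k+3) (2*(k+1)+2) (2*(k+1)+1) (by omega) (by omega) h2⟩
  have emono0 : ∀ k, riccatiSeq A11 A12 A22 (2*k) ≤ riccatiSeq A11 A12 A22 (2*k+2) := by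
    intro k
    induction k with
    | zero => exact cast 0 2 (2*0) (2*0+2) (by omega) (by omega) h02
    | succ k ih =>
      have h1 : riccatiSeq A11 A12 A22 (2*k+3) ≤ riccatiSeq A11 A12 A22 (2*k+1) :=
        cast ((2*k+2)+1) ((2*k)+1) (2*k+3) (2*k+1) (by omega) (by omega)
          (step (2*k) (2*k+2) ih)
      have h2 : riccatiSeq A11 A12 A22 (2*k+2) ≤ riccatiSeq A11 A12 A22 (2*k+4) :=
        cast ((2*k+1)+1) ((2*k+3)+1) (2*k+2) (2*k+4) (by omega) (by omega)
          (step (2*k+3) (2*k+1) h1)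
      exact cast (2*k+2) (2*k+4) (2*(k+1)) (2*(k+1)+2) (by omega) (by omega) h2
  have oanti0 : ∀ k, riccatiSeq A11 A12 A22 (2*(k+1)+1) ≤ riccatiSeq A11 A12 A22 (2*k+1) := by
    intro k
    induction k with
    | zero =>
      exact cast (2+1) (0+1) (2*(0+1)+1) (2*0+1) (by omega) (by omega) (step 0 2 h02)
    | succ k ih =>
      have h1 : riccatiSeq A11 A12 A22 (2*k+2) ≤ riccatiSeq A11 A12 A22 (2*k+4) :=
        cast ((2*k+1)+1) ((2*(k+1)+1)+1) (2*k+2) (2*k+4) (by omega) (by omega)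
          (step (2*(k+1)+1) (2*k+1) ih)
      exact cast ((2*k+4)+1) ((2*k+2)+1) (2*((k+1)+1)+1) (2*(k+1)+1) (by omega) (by omega)
        (step (2*k+2) (2*k+4) h1)
  have emono : Monotone (fun k => riccatiSeq A11 A12 A22 (2*k)) :=
    monotone_nat_of_le_succ fun k =>
      cast (2*k) (2*k+2) (2*k) (2*(k+1)) (by omega) (by omega) (emono0 k)
  have oanti : Antitone (fun k => riccatiSeq A11 A12 A22 (2*k+1)) :=
    antitone_nat_of_succ_le fun k => oanti0 k
  intro n m
  calc riccatiSeq A11 A12 A22 (2*n)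
      ≤ riccatiSeq A11 A12 A22 (2*(max n m)) := emono (le_max_left n m)
    _ ≤ riccatiSeq A11 A12 A22 (2*(max n m)+1) := (both (max n m)).1
    _ ≤ riccatiSeq A11 A12 A22 (2*m+1) := oanti (le_max_right n m)
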